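/- Let F : ℤ² → [0,∞) satisfy Σ_{λ∈ℤ²} F(λ)(|λ|+1) < ∞. Let v ∈ ℤ², and let C₁, C₂ ⊂ ℝ² be two closed bounded cones with common vertex v whose sides are segments of rational lines and whose apertures are smaller than π, and suppose C₁ ∩ C₂ = {v}; precisely, C_i = (v + {α u_i + β w_i : α,β ≥ 0}) ∩ B̄(v,ρ_i) where u_i, w_i ∈ ℤ² are linearly independent and B̄(v,ρ_i) is a closed Euclidean disk, and the two cones meet only at v. Suppose that for all sufficiently large positive integers R, G_R : (1/R)ℤ² × (1/R)ℤ² → [0,∞) satisfies 0 ≤ G_R(ν₁,ν₂) ≤ (1/R)·F(R(ν₁−ν₂)) for all ν₁,ν₂ ∈ (1/R)ℤ², and G_R(ν₁,ν₂) = 0 whenever (ν₁,ν₂) ∉ C₁ × C₂. Then lim_{R→∞} Σ_{ν₁,ν₂ ∈ (1/R)ℤ²} G_R(ν₁,ν₂) = 0. -/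

import Mathlib

open Filter Topology

noncomputable section

/-- Euclidean norm on ℝ². -/
def enorm2 (v : ℝ × ℝ) : ℝ := Real.sqrt (v.1 ^ 2 + v.2 ^ 2)

/-- Cast an integer pair to ℝ². -/
def toR (v : ℤ × ℤ) : ℝ × ℝ := ((v.1 : ℝ), (v.2 : ℝ))

/-- The point of `(1/R)ℤ²` indexed by the integer pair `v`. -/
def toE (R : ℕ) (v : ℤ × ℤ) : ℝ × ℝ := ((v.1 : ℝ) / R, (v.2 : ℝ) / R)

lemma enorm2_eq_complex (x : ℝ × ℝ) : enorm2 x = ‖(⟨x.1, x.2⟩ : ℂ)‖ := by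
  simp [enorm2, Complex.norm_def, Complex.normSq_mk, sq]

lemma enorm2_nonneg (x : ℝ × ℝ) : 0 ≤ enorm2 x := Real.sqrt_nonneg _

lemma enorm2_add_le (x y : ℝ × ℝ) : enorm2 (x + y) ≤ enorm2 x + enorm2 y := by
  have h : ((⟨(x + y).1, (x + y).2⟩ : ℂ)) = (⟨x.1, x.2⟩ : ℂ) + ⟨y.1, y.2⟩ := by
    simp [Complex.ext_iff]
  rw [enorm2_eq_complex, enorm2_eq_complex, enorm2_eq_complex, h]
  exact norm_add_le _ _

lemma enorm2_smul (t : ℝ) (x : ℝ × ℝ) : enorm2 (t • x) = |t| * enorm2 x := by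
  have h : ((⟨(t • x).1, (t • x).2⟩ : ℂ)) = (t : ℂ) * ⟨x.1, x.2⟩ := by
    simp [Complex.ext_iff, Prod.smul_fst, Prod.smul_snd, smul_eq_mul]
  rw [enorm2_eq_complex, enorm2_eq_complex, h, norm_mul]
  simp

lemma enorm2_neg (x : ℝ × ℝ) : enorm2 (-x) = enorm2 x := by simp [enorm2]

lemma enorm2_sub_comm (x y : ℝ × ℝ) : enorm2 (x - y) = enorm2 (y - x) := by
  rw [← enorm2_neg, neg_sub]

lemma abs_fst_le_enorm2 (x : ℝ × ℝ) : |x.1| ≤ enorm2 x := by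
  simpa [enorm2_eq_complex] using Complex.abs_re_le_norm ⟨x.1, x.2⟩

lemma abs_snd_le_enorm2 (x : ℝ × ℝ) : |x.2| ≤ enorm2 x := by
  simpa [enorm2_eq_complex] using Complex.abs_im_le_norm ⟨x.1, x.2⟩

lemma enorm2_eq_zero {x : ℝ × ℝ} (h : enorm2 x = 0) : x = 0 := by
  rw [enorm2_eq_complex] at h
  have h2 := norm_eq_zero.mp h
  rw [Complex.ext_iff] at h2
  exact Prod.ext h2.1 h2.2

lemma dist_le_enorm2 (x y : ℝ × ℝ) : dist x y ≤ enorm2 (x - y) := by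
  rw [Prod.dist_eq]
  refine max_le ?_ ?_
  · simpa [Real.dist_eq] using abs_fst_le_enorm2 (x - y)
  · simpa [Real.dist_eq] using abs_snd_le_enorm2 (x - y)

lemma continuous_enorm2_sub (a : ℝ × ℝ) : Continuous fun p : ℝ × ℝ => enorm2 (p - a) := by
  unfold enorm2
  fun_prop

lemma cone_mem_iff (vz u w : ℤ × ℤ) (hli : u.1 * w.2 - u.2 * w.1 ≠ 0) (p : ℝ × ℝ) :
    (∃ α β : ℝ, 0 ≤ α ∧ 0 ≤ β ∧ p = toR vz + α • toR u + β • toR w) ↔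
    (0 ≤ ((p.1 - (vz.1:ℝ)) * (w.2:ℝ) - (p.2 - (vz.2:ℝ)) * (w.1:ℝ)) *
        ((u.1:ℝ) * (w.2:ℝ) - (u.2:ℝ) * (w.1:ℝ)) ∧
     0 ≤ ((u.1:ℝ) * (p.2 - (vz.2:ℝ)) - (u.2:ℝ) * (p.1 - (vz.1:ℝ))) *
        ((u.1:ℝ) * (w.2:ℝ) - (u.2:ℝ) * (w.1:ℝ))) := by
  have hD : ((u.1:ℝ) * (w.2:ℝ) - (u.2:ℝ) * (w.1:ℝ)) ≠ 0 := by
    intro h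
    apply hli
    exact_mod_cast h
  constructor
  · rintro ⟨α, β, hα, hβ, rfl⟩
    simp only [toR, Prod.ext_iff, Prod.fst_add, Prod.snd_add, Prod.smul_fst, Prod.smul_snd,
      smul_eq_mul]
    constructor
    · have h : ((vz.1:ℝ) + α * u.1 + β * w.1 - vz.1) * w.2 - ((vz.2:ℝ) + α * u.2 + β * w.2 - vz.2) * w.1
          = α * ((u.1:ℝ) * w.2 - u.2 * w.1) := by ring
      rw [h]
      nlinarith [sq_nonneg ((u.1:ℝ) * w.2 - u.2 * w.1)]
    · have h : ((u.1:ℝ)) * ((vz.2:ℝ) + α * u.2 + β * w.2 - vz.2) - (u.2:ℝ) * ((vz.1:ℝ) + α * u.1 + β * w.1 - vz.1)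
          = β * ((u.1:ℝ) * w.2 - u.2 * w.1) := by ring
      rw [h]
      nlinarith [sq_nonneg ((u.1:ℝ) * w.2 - u.2 * w.1)]
  · rintro ⟨h1, h2⟩
    set D : ℝ := (u.1:ℝ) * (w.2:ℝ) - (u.2:ℝ) * (w.1:ℝ) with hDdef
    refine ⟨((p.1 - (vz.1:ℝ)) * (w.2:ℝ) - (p.2 - (vz.2:ℝ)) * (w.1:ℝ)) / D,
      ((u.1:ℝ) * (p.2 - (vz.2:ℝ)) - (u.2:ℝ) * (p.1 - (vz.1:ℝ))) / D, ?_, ?_, ?_⟩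
    · rw [div_nonneg_iff]
      rcases lt_or_gt_of_ne hD with h | h
      · right; exact ⟨by nlinarith, by linarith⟩
      · left; exact ⟨by nlinarith, by linarith⟩
    · rw [div_nonneg_iff]
      rcases lt_or_gt_of_ne hD with h | h
      · right; exact ⟨by nlinarith, by linarith⟩
      · left; exact ⟨by nlinarith, by linarith⟩
    · simp only [toR, Prod.ext_iff, Prod.fst_add, Prod.snd_add, Prod.smul_fst, Prod.smul_snd,
        smul_eq_mul]
      constructor
      · field_simp
        ring
      · field_simp
        ring

lemma cone_isClosed (vz u w : ℤ × ℤ) (ρ : ℝ) (hli : u.1 * w.2 - u.2 * w.1 ≠ 0)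
    (C : Set (ℝ × ℝ))
    (hC : C = {p : ℝ × ℝ |
      (∃ α β : ℝ, 0 ≤ α ∧ 0 ≤ β ∧ p = toR vz + α • toR u + β • toR w) ∧
      enorm2 (p - toR vz) ≤ ρ}) : IsClosed C := by
  have h : C = ({p : ℝ × ℝ | 0 ≤ ((p.1 - (vz.1:ℝ)) * (w.2:ℝ) - (p.2 - (vz.2:ℝ)) * (w.1:ℝ)) *
        ((u.1:ℝ) * (w.2:ℝ) - (u.2:ℝ) * (w.1:ℝ))} ∩
      {p : ℝ × ℝ | 0 ≤ ((u.1:ℝ) * (p.2 - (vz.2:ℝ)) - (u.2:ℝ) * (p.1 - (vz.1:ℝ))) *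
        ((u.1:ℝ) * (w.2:ℝ) - (u.2:ℝ) * (w.1:ℝ))} ∩
      {p : ℝ × ℝ | enorm2 (p - toR vz) ≤ ρ}) := by
    rw [hC]
    ext p
    simp only [Set.mem_setOf_eq, Set.mem_inter_iff]
    rw [cone_mem_iff vz u w hli p]
  rw [h]
  refine IsClosed.inter (IsClosed.inter ?_ ?_) ?_
  · exact isClosed_le continuous_const (by fun_prop)
  · exact isClosed_le continuous_const (by fun_prop)
  · exact isClosed_le (continuous_enorm2_sub _) continuous_const

lemma cone_smul_mem (vz u w : ℤ × ℤ) (ρ : ℝ) (C : Set (ℝ × ℝ))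
    (hC : C = {p : ℝ × ℝ |
      (∃ α β : ℝ, 0 ≤ α ∧ 0 ≤ β ∧ p = toR vz + α • toR u + β • toR w) ∧
      enorm2 (p - toR vz) ≤ ρ})
    {p : ℝ × ℝ} (hp : p ∈ C) {t : ℝ} (ht : 0 ≤ t)
    (hρ : t * enorm2 (p - toR vz) ≤ ρ) : toR vz + t • (p - toR vz) ∈ C := by
  subst hC
  obtain ⟨⟨α, β, hα, hβ, hpe⟩, _⟩ := hp
  constructor
  · refine ⟨t * α, t * β, mul_nonneg ht hα, mul_nonneg ht hβ, ?_⟩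
    rw [hpe]
    simp only [Prod.ext_iff, Prod.fst_add, Prod.snd_add, Prod.fst_sub, Prod.snd_sub,
      Prod.smul_fst, Prod.smul_snd, smul_eq_mul, toR]
    constructor <;> ring
  · have h : toR vz + t • (p - toR vz) - toR vz = t • (p - toR vz) := by abel
    rw [h, enorm2_smul, abs_of_nonneg ht]
    exact hρ

lemma sphere_dist_pos (vz : ℝ × ℝ) (r : ℝ) (hr : 0 < r) (A B : Set (ℝ × ℝ))
    (hA : IsClosed A) (hB : IsClosed B) (hBne : B.Nonempty) (hAB : A ∩ B ⊆ {vz}) :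
    ∃ δ > 0, ∀ p ∈ A, enorm2 (p - vz) = r → ∀ q ∈ B, δ ≤ enorm2 (p - q) := by
  set T : Set (ℝ × ℝ) := A ∩ {p | enorm2 (p - vz) = r} with hT
  have hTclosed : IsClosed T :=
    hA.inter (isClosed_eq (continuous_enorm2_sub vz) continuous_const)
  have hTbdd : Bornology.IsBounded T := by
    refine (Metric.isBounded_closedBall (x := vz) (r := r)).subset ?_
    rintro p ⟨_, hpe⟩
    simp only [Metric.mem_closedBall]
    calc dist p vz ≤ enorm2 (p - vz) := dist_le_enorm2 p vz
    _ = r := hpe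
  have hTcomp : IsCompact T := Metric.isCompact_of_isClosed_isBounded hTclosed hTbdd
  rcases T.eq_empty_or_nonempty with hTe | hTne
  · refine ⟨1, one_pos, fun p hp hpe q hq => ?_⟩
    exfalso
    have : p ∈ T := ⟨hp, hpe⟩
    rw [hTe] at this
    exact this
  · obtain ⟨p₀, hp₀T, hmin⟩ :=
      hTcomp.exists_isMinOn hTne (Metric.continuous_infDist_pt B).continuousOn
    have hp₀nB : p₀ ∉ B := by
      intro hmem
      have h1 : p₀ = vz := hAB ⟨hp₀T.1, hmem⟩
      have h2 := hp₀T.2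
      rw [h1] at h2
      simp only [sub_self, Set.mem_setOf_eq] at h2
      have : enorm2 (0 : ℝ × ℝ) = 0 := by simp [enorm2]
      rw [this] at h2
      exact absurd h2.symm (ne_of_gt hr)
    have hδpos : 0 < Metric.infDist p₀ B := (hB.notMem_iff_infDist_pos hBne).mp hp₀nB
    refine ⟨Metric.infDist p₀ B, hδpos, fun p hp hpe q hq => ?_⟩
    calc Metric.infDist p₀ B ≤ Metric.infDist p B := hmin ⟨hp, hpe⟩
    _ ≤ dist p q := Metric.infDist_le_dist_of_mem hq
    _ ≤ enorm2 (p - q) := dist_le_enorm2 p q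

lemma cone_separation
    (v u₁ w₁ u₂ w₂ : ℤ × ℤ) (ρ₁ ρ₂ : ℝ) (hρ₁ : 0 < ρ₁) (hρ₂ : 0 < ρ₂)
    (hli₁ : u₁.1 * w₁.2 - u₁.2 * w₁.1 ≠ 0)
    (hli₂ : u₂.1 * w₂.2 - u₂.2 * w₂.1 ≠ 0)
    (C₁ C₂ : Set (ℝ × ℝ))
    (hC₁ : C₁ = {p : ℝ × ℝ |
      (∃ α β : ℝ, 0 ≤ α ∧ 0 ≤ β ∧ p = toR v + α • toR u₁ + β • toR w₁) ∧
      enorm2 (p - toR v) ≤ ρ₁})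
    (hC₂ : C₂ = {p : ℝ × ℝ |
      (∃ α β : ℝ, 0 ≤ α ∧ 0 ≤ β ∧ p = toR v + α • toR u₂ + β • toR w₂) ∧
      enorm2 (p - toR v) ≤ ρ₂})
    (hsep : C₁ ∩ C₂ = {toR v}) :
    ∃ c > 0, ∀ p ∈ C₁, ∀ q ∈ C₂, c * enorm2 (p - toR v) ≤ enorm2 (p - q) := by
  have closed₁ := cone_isClosed v u₁ w₁ ρ₁ hli₁ C₁ hC₁
  have closed₂ := cone_isClosed v u₂ w₂ ρ₂ hli₂ C₂ hC₂
  have hv : toR v ∈ C₁ ∩ C₂ := by rw [hsep]; rfl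
  set r : ℝ := min ρ₁ ρ₂ with hrdef
  have hr : 0 < r := lt_min hρ₁ hρ₂
  obtain ⟨δ₁, hδ₁pos, hδ₁⟩ := sphere_dist_pos (toR v) r hr C₁ C₂ closed₁ closed₂
    ⟨toR v, hv.2⟩ hsep.subset
  obtain ⟨δ₂, hδ₂pos, hδ₂⟩ := sphere_dist_pos (toR v) r hr C₂ C₁ closed₂ closed₁
    ⟨toR v, hv.1⟩ (by rw [Set.inter_comm]; exact hsep.subset)
  refine ⟨min δ₁ δ₂ / r, by positivity, fun p hp q hq => ?_⟩
  rcases eq_or_lt_of_le (enorm2_nonneg (p - toR v)) with hpz | hppos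
  · rw [← hpz, mul_zero]
    exact enorm2_nonneg _
  set M : ℝ := max (enorm2 (p - toR v)) (enorm2 (q - toR v)) with hMdef
  have hM : 0 < M := lt_of_lt_of_le hppos (le_max_left _ _)
  set t : ℝ := r / M with htdef
  have ht : 0 < t := div_pos hr hM
  have hpM : enorm2 (p - toR v) ≤ M := le_max_left _ _
  have hqM : enorm2 (q - toR v) ≤ M := le_max_right _ _
  have htp : t * enorm2 (p - toR v) ≤ r := by
    rw [htdef, div_mul_eq_mul_div, div_le_iff₀ hM]
    nlinarith
  have htq : t * enorm2 (q - toR v) ≤ r := by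
    rw [htdef, div_mul_eq_mul_div, div_le_iff₀ hM]
    nlinarith
  have hp' : toR v + t • (p - toR v) ∈ C₁ :=
    cone_smul_mem v u₁ w₁ ρ₁ C₁ hC₁ hp ht.le (le_trans htp (min_le_left _ _))
  have hq' : toR v + t • (q - toR v) ∈ C₂ :=
    cone_smul_mem v u₂ w₂ ρ₂ C₂ hC₂ hq ht.le (le_trans htq (min_le_right _ _))
  have hdiff : (toR v + t • (p - toR v)) - (toR v + t • (q - toR v)) = t • (p - q) := by
    rw [add_sub_add_left_eq_sub, ← smul_sub]
    congr 1
    abel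
  have hediff : enorm2 ((toR v + t • (p - toR v)) - (toR v + t • (q - toR v)))
      = t * enorm2 (p - q) := by
    rw [hdiff, enorm2_smul, abs_of_nonneg ht.le]
  have hcancel : ∀ x : ℝ × ℝ, toR v + t • (x - toR v) - toR v = t • (x - toR v) := by
    intro x; abel
  rcases le_total (enorm2 (q - toR v)) (enorm2 (p - toR v)) with hcase | hcase
  · -- M = enorm2 (p - toR v)
    have hMeq : M = enorm2 (p - toR v) := max_eq_left hcase
    have hsphere : enorm2 ((toR v + t • (p - toR v)) - toR v) = r := by
      rw [hcancel, enorm2_smul, abs_of_nonneg ht.le, htdef, ← hMeq]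
      field_simp
    have hkey := hδ₁ _ hp' hsphere _ hq'
    rw [hediff] at hkey
    -- hkey : δ₁ ≤ t * enorm2 (p - q)
    have h1 : δ₁ * M ≤ r * enorm2 (p - q) := by
      rw [htdef] at hkey
      rw [div_mul_eq_mul_div, le_div_iff₀ hM] at hkey
      linarith [hkey]
    rw [div_mul_eq_mul_div, div_le_iff₀ hr]
    have h2 : min δ₁ δ₂ ≤ δ₁ := min_le_left _ _
    nlinarith [enorm2_nonneg (p - q), enorm2_nonneg (p - toR v)]
  · -- M = enorm2 (q - toR v)
    have hMeq : M = enorm2 (q - toR v) := max_eq_right hcase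
    have hsphere : enorm2 ((toR v + t • (q - toR v)) - toR v) = r := by
      rw [hcancel, enorm2_smul, abs_of_nonneg ht.le, htdef, ← hMeq]
      field_simp
    have hkey := hδ₂ _ hq' hsphere _ hp'
    have hswap : enorm2 ((toR v + t • (q - toR v)) - (toR v + t • (p - toR v)))
        = t * enorm2 (p - q) := by
      rw [enorm2_sub_comm, hediff]
    rw [hswap] at hkey
    have h1 : δ₂ * M ≤ r * enorm2 (p - q) := by
      rw [htdef] at hkey
      rw [div_mul_eq_mul_div, le_div_iff₀ hM] at hkey
      linarith [hkey]
    rw [div_mul_eq_mul_div, div_le_iff₀ hr]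
    have h2 : min δ₁ δ₂ ≤ δ₂ := min_le_right _ _
    nlinarith [enorm2_nonneg (p - q), enorm2_nonneg (p - toR v)]

/-- Auxiliary dominating function. -/
def auxB (K₁ ρ₂ : ℝ) (F : ℤ × ℤ → ℝ) (R : ℕ) (μ : ℤ × ℤ) : ℝ :=
  (2 * min (K₁ * enorm2 (toR μ)) (ρ₂ * R) + 3) ^ 2 * ((R : ℝ)⁻¹ * F μ)

lemma auxB_nonneg (K₁ ρ₂ : ℝ) (F : ℤ × ℤ → ℝ) (hF0 : ∀ x, 0 ≤ F x) (R : ℕ) (μ : ℤ × ℤ) :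
    0 ≤ auxB K₁ ρ₂ F R μ :=
  mul_nonneg (sq_nonneg _) (mul_nonneg (by positivity) (hF0 μ))

lemma auxB_le (K₁ ρ₂ : ℝ) (hK₁ : 0 < K₁) (hρ₂ : 0 < ρ₂) (F : ℤ × ℤ → ℝ)
    (hF0 : ∀ x, 0 ≤ F x) (R : ℕ) (μ : ℤ × ℤ) :
    auxB K₁ ρ₂ F R μ ≤ ((2 * K₁ + 3) * (2 * ρ₂ + 3)) * (F μ * (enorm2 (toR μ) + 1)) := by
  have e0 : 0 ≤ enorm2 (toR μ) := enorm2_nonneg _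
  rcases Nat.eq_zero_or_pos R with rfl | hRpos
  · simp only [auxB, Nat.cast_zero, inv_zero, zero_mul, mul_zero]
    have h1 : (0:ℝ) ≤ (2 * K₁ + 3) * (2 * ρ₂ + 3) := by positivity
    have h2 : (0:ℝ) ≤ F μ * (enorm2 (toR μ) + 1) := mul_nonneg (hF0 μ) (by linarith)
    exact mul_nonneg h1 h2
  · have hR1 : (1 : ℝ) ≤ (R : ℝ) := by exact_mod_cast hRpos
    have hRr : (0 : ℝ) < (R : ℝ) := lt_of_lt_of_le one_pos hR1
    set e : ℝ := enorm2 (toR μ)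
    set m : ℝ := min (K₁ * e) (ρ₂ * R) with hm
    have hmin1 : m ≤ K₁ * e := min_le_left _ _
    have hmin2 : m ≤ ρ₂ * R := min_le_right _ _
    have hmin0 : 0 ≤ m := le_min (by positivity) (by positivity)
    have hsq : (2 * m + 3) ^ 2 ≤ (2 * (K₁ * e) + 3) * (2 * (ρ₂ * R) + 3) := by nlinarith
    have hF0μ : 0 ≤ F μ := hF0 μ
    have hinv : (2 * (ρ₂ * R) + 3) * (R : ℝ)⁻¹ ≤ 2 * ρ₂ + 3 := by
      rw [← div_eq_mul_inv, div_le_iff₀ hRr]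
      nlinarith
    have hK : 2 * (K₁ * e) + 3 ≤ (2 * K₁ + 3) * (e + 1) := by nlinarith
    calc auxB K₁ ρ₂ F R μ = (2 * m + 3) ^ 2 * ((R : ℝ)⁻¹ * F μ) := rfl
    _ ≤ ((2 * (K₁ * e) + 3) * (2 * (ρ₂ * R) + 3)) * ((R : ℝ)⁻¹ * F μ) :=
        mul_le_mul_of_nonneg_right hsq (mul_nonneg (by positivity) hF0μ)
    _ = ((2 * (K₁ * e) + 3) * F μ) * ((2 * (ρ₂ * R) + 3) * (R : ℝ)⁻¹) := by ring
    _ ≤ ((2 * (K₁ * e) + 3) * F μ) * (2 * ρ₂ + 3) :=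
        mul_le_mul_of_nonneg_left hinv (mul_nonneg (by positivity) hF0μ)
    _ ≤ (((2 * K₁ + 3) * (e + 1)) * F μ) * (2 * ρ₂ + 3) :=
        mul_le_mul_of_nonneg_right (mul_le_mul_of_nonneg_right hK hF0μ) (by positivity)
    _ = ((2 * K₁ + 3) * (2 * ρ₂ + 3)) * (F μ * (e + 1)) := by ring

lemma auxB_tendsto (K₁ ρ₂ : ℝ) (hK₁ : 0 < K₁) (hρ₂ : 0 < ρ₂) (F : ℤ × ℤ → ℝ)
    (hF0 : ∀ x, 0 ≤ F x) (μ : ℤ × ℤ) :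
    Tendsto (fun R : ℕ => auxB K₁ ρ₂ F R μ) atTop (𝓝 0) := by
  have e0 : 0 ≤ enorm2 (toR μ) := enorm2_nonneg _
  set e : ℝ := enorm2 (toR μ)
  set C0 : ℝ := (2 * (K₁ * e) + 3) ^ 2 * F μ with hC0
  refine squeeze_zero (g := fun R : ℕ => C0 * (R : ℝ)⁻¹)
    (fun R => auxB_nonneg K₁ ρ₂ F hF0 R μ) (fun R => ?_) ?_
  · have hmin1 : min (K₁ * e) (ρ₂ * R) ≤ K₁ * e := min_le_left _ _
    have hmin0 : 0 ≤ min (K₁ * e) (ρ₂ * (R:ℝ)) := le_min (mul_nonneg hK₁.le e0) (mul_nonneg hρ₂.le (Nat.cast_nonneg R))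
    have hsq : (2 * min (K₁ * e) (ρ₂ * (R:ℝ)) + 3) ^ 2 ≤ (2 * (K₁ * e) + 3) ^ 2 := by
      apply pow_le_pow_left₀ (by linarith) (by linarith)
    calc auxB K₁ ρ₂ F R μ
        ≤ (2 * (K₁ * e) + 3) ^ 2 * ((R : ℝ)⁻¹ * F μ) :=
          mul_le_mul_of_nonneg_right hsq (mul_nonneg (by positivity) (hF0 μ))
    _ = C0 * (R : ℝ)⁻¹ := by rw [hC0]; ring
  · have := tendsto_inv_atTop_nhds_zero_nat.const_mul C0
    simpa using this

/-- Reindexing `(ν₁, ν₂) = (ν₂ + μ, ν₂)`. -/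
def shiftEquiv : ((ℤ × ℤ) × (ℤ × ℤ)) ≃ ((ℤ × ℤ) × (ℤ × ℤ)) where
  toFun q := (q.2 + q.1, q.2)
  invFun p := (p.1 - p.2, p.2)
  left_inv q := by simp
  right_inv p := by simp

lemma int_bounds_of_abs_le {n k : ℤ} {x : ℝ} (h : |(n : ℝ) - (k : ℝ)| ≤ x) :
    k - ⌈x⌉ ≤ n ∧ n ≤ k + ⌈x⌉ := by
  rw [abs_le] at h
  have hcl := Int.le_ceil x
  constructor
  · have h1 : (k : ℝ) - ⌈x⌉ ≤ n := by linarith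
    exact_mod_cast h1
  · have h2 : (n : ℝ) ≤ k + ⌈x⌉ := by linarith
    exact_mod_cast h2

lemma toE_coord_box {R : ℕ} (hRpos : (0 : ℝ) < (R : ℝ)) {ν vz : ℤ × ℤ} {ρ' : ℝ}
    (h : enorm2 (toE R ν - toR vz) ≤ ρ') :
    ν ∈ Finset.Icc (((R : ℤ) * vz.1 - ⌈ρ' * (R : ℝ)⌉, (R : ℤ) * vz.2 - ⌈ρ' * (R : ℝ)⌉) : ℤ × ℤ)
      (((R : ℤ) * vz.1 + ⌈ρ' * (R : ℝ)⌉, (R : ℤ) * vz.2 + ⌈ρ' * (R : ℝ)⌉) : ℤ × ℤ) := by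
  have hRne : (R : ℝ) ≠ 0 := ne_of_gt hRpos
  have h1 : |(toE R ν - toR vz).1| ≤ ρ' := le_trans (abs_fst_le_enorm2 _) h
  have h2 : |(toE R ν - toR vz).2| ≤ ρ' := le_trans (abs_snd_le_enorm2 _) h
  have e1 : (toE R ν - toR vz).1 = (ν.1 : ℝ) / R - vz.1 := rfl
  have e2 : (toE R ν - toR vz).2 = (ν.2 : ℝ) / R - vz.2 := rfl
  rw [e1] at h1
  rw [e2] at h2
  have h1' : |(ν.1 : ℝ) - (((R : ℤ) * vz.1 : ℤ) : ℝ)| ≤ ρ' * R := by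
    have heq : (ν.1 : ℝ) - (((R : ℤ) * vz.1 : ℤ) : ℝ) = ((ν.1 : ℝ) / R - vz.1) * R := by
      push_cast
      field_simp
    rw [heq, abs_mul, abs_of_pos hRpos]
    exact mul_le_mul_of_nonneg_right h1 hRpos.le
  have h2' : |(ν.2 : ℝ) - (((R : ℤ) * vz.2 : ℤ) : ℝ)| ≤ ρ' * R := by
    have heq : (ν.2 : ℝ) - (((R : ℤ) * vz.2 : ℤ) : ℝ) = ((ν.2 : ℝ) / R - vz.2) * R := by
      push_cast
      field_simp
    rw [heq, abs_mul, abs_of_pos hRpos]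
    exact mul_le_mul_of_nonneg_right h2 hRpos.le
  obtain ⟨ha1, hb1⟩ := int_bounds_of_abs_le h1'
  obtain ⟨ha2, hb2⟩ := int_bounds_of_abs_le h2'
  simp only [Finset.mem_Icc, Prod.le_def]
  exact ⟨⟨ha1, ha2⟩, ⟨hb1, hb2⟩⟩

lemma box_card_le (a b d : ℤ) (hd : 0 ≤ d) {x : ℝ} (hx : (d : ℝ) ≤ x) :
    ((Finset.Icc ((a - d, b - d) : ℤ × ℤ) ((a + d, b + d) : ℤ × ℤ)).card : ℝ)
      ≤ (2 * x + 1) ^ 2 := by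
  have hcard : (Finset.Icc ((a - d, b - d) : ℤ × ℤ) ((a + d, b + d) : ℤ × ℤ)).card
      = (2 * d + 1).toNat * (2 * d + 1).toNat := by
    rw [Finset.card_Icc_prod]
    simp only [Int.card_Icc]
    congr 1 <;> · congr 1; ring
  rw [hcard]
  have htn : ((2 * d + 1).toNat : ℤ) = 2 * d + 1 := Int.toNat_of_nonneg (by omega)
  have h1 : ((2 * d + 1).toNat : ℝ) ≤ 2 * x + 1 := by
    have : ((2 * d + 1).toNat : ℝ) = ((2 * d + 1 : ℤ) : ℝ) := by exact_mod_cast congrArg (fun z : ℤ => (z : ℝ)) htn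
    rw [this]
    push_cast
    linarith
  have h0 : (0 : ℝ) ≤ ((2 * d + 1).toNat : ℝ) := Nat.cast_nonneg _
  push_cast
  nlinarith

/-- kernels supported on a pair of closed bounded rational cones
meeting only at their common lattice vertex have vanishing normalized sums. -/
theorem supports_in_cones_limit_zero
    (F : ℤ × ℤ → ℝ) (hF0 : ∀ v, 0 ≤ F v)
    (hF : Summable fun v : ℤ × ℤ => F v * (enorm2 (toR v) + 1))
    (v : ℤ × ℤ) (u₁ w₁ u₂ w₂ : ℤ × ℤ) (ρ₁ ρ₂ : ℝ) (hρ₁ : 0 < ρ₁) (hρ₂ : 0 < ρ₂)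
    (hli₁ : u₁.1 * w₁.2 - u₁.2 * w₁.1 ≠ 0)
    (hli₂ : u₂.1 * w₂.2 - u₂.2 * w₂.1 ≠ 0)
    (C₁ C₂ : Set (ℝ × ℝ))
    (hC₁ : C₁ = {p : ℝ × ℝ |
      (∃ α β : ℝ, 0 ≤ α ∧ 0 ≤ β ∧ p = toR v + α • toR u₁ + β • toR w₁) ∧
      enorm2 (p - toR v) ≤ ρ₁})
    (hC₂ : C₂ = {p : ℝ × ℝ |
      (∃ α β : ℝ, 0 ≤ α ∧ 0 ≤ β ∧ p = toR v + α • toR u₂ + β • toR w₂) ∧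
      enorm2 (p - toR v) ≤ ρ₂})
    (hsep : C₁ ∩ C₂ = {toR v})
    (G : ℕ → (ℤ × ℤ) → (ℤ × ℤ) → ℝ)
    (hG : ∃ R₀ : ℕ, ∀ R ≥ R₀, ∀ ν₁ ν₂ : ℤ × ℤ,
      0 ≤ G R ν₁ ν₂ ∧
      G R ν₁ ν₂ ≤ (1 / (R : ℝ)) * F (ν₁ - ν₂) ∧
      ((toE R ν₁, toE R ν₂) ∉ C₁ ×ˢ C₂ → G R ν₁ ν₂ = 0)) :
    Tendsto (fun R : ℕ => ∑' p : (ℤ × ℤ) × (ℤ × ℤ), G R p.1 p.2) atTop (𝓝 0) := by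
  obtain ⟨R₀, hG₀⟩ := hG
  obtain ⟨c, hc, hcsep⟩ := cone_separation v u₁ w₁ u₂ w₂ ρ₁ ρ₂ hρ₁ hρ₂ hli₁ hli₂
    C₁ C₂ hC₁ hC₂ hsep
  set K₁ : ℝ := 1 + 1 / c with hK₁def
  have hK₁ : 0 < K₁ := by positivity
  -- dominating function for the tsum over μ
  set g₀ : (ℤ × ℤ) → ℝ :=
    fun μ => ((2 * K₁ + 3) * (2 * ρ₂ + 3)) * (F μ * (enorm2 (toR μ) + 1)) with hg₀def
  have hg₀sum : Summable g₀ := hF.mul_left _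
  have hDCT : Tendsto (fun R : ℕ => ∑' μ : ℤ × ℤ, auxB K₁ ρ₂ F R μ) atTop (𝓝 0) := by
    have h := tendsto_tsum_of_dominated_convergence (𝓕 := atTop)
      (f := fun (R : ℕ) (μ : ℤ × ℤ) => auxB K₁ ρ₂ F R μ) (g := fun _ : ℤ × ℤ => (0 : ℝ))
      (bound := g₀) hg₀sum (fun μ => auxB_tendsto K₁ ρ₂ hK₁ hρ₂ F hF0 μ)
      (Eventually.of_forall fun R μ => by
        rw [Real.norm_eq_abs, abs_of_nonneg (auxB_nonneg K₁ ρ₂ F hF0 R μ)]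
        exact auxB_le K₁ ρ₂ hK₁ hρ₂ F hF0 R μ)
    simpa using h
  -- main estimate for large R
  have hmain : ∀ R : ℕ, R ≥ max R₀ 1 →
      (∑' p : (ℤ × ℤ) × (ℤ × ℤ), G R p.1 p.2) ≤ ∑' μ : ℤ × ℤ, auxB K₁ ρ₂ F R μ := by
    intro R hR
    have hRR₀ : R ≥ R₀ := le_trans (le_max_left _ _) hR
    have hR1 : 1 ≤ R := le_trans (le_max_right _ _) hR
    have hRpos : (0 : ℝ) < (R : ℝ) := by exact_mod_cast hR1
    have hRne : (R : ℝ) ≠ 0 := ne_of_gt hRpos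
    -- big boxes containing the supports
    set DD : ℤ := ⌈max ρ₁ ρ₂ * (R : ℝ)⌉ with hDDdef
    set Bx : Finset (ℤ × ℤ) :=
      Finset.Icc (((R : ℤ) * v.1 - DD, (R : ℤ) * v.2 - DD) : ℤ × ℤ)
        (((R : ℤ) * v.1 + DD, (R : ℤ) * v.2 + DD) : ℤ × ℤ) with hBxdef
    set diffBox : Finset (ℤ × ℤ) :=
      Finset.Icc ((-(2 * DD), -(2 * DD)) : ℤ × ℤ) ((2 * DD, 2 * DD) : ℤ × ℤ) with hdiffBoxdef
    -- support facts
    have hsupp : ∀ ν₁ ν₂ : ℤ × ℤ, G R ν₁ ν₂ ≠ 0 → toE R ν₁ ∈ C₁ ∧ toE R ν₂ ∈ C₂ := by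
      intro ν₁ ν₂ hne
      by_contra hcon
      exact hne ((hG₀ R hRR₀ ν₁ ν₂).2.2 (fun hmem => hcon ⟨hmem.1, hmem.2⟩))
    have hmemBx : ∀ (ν : ℤ × ℤ) (ρ' : ℝ), ρ' ≤ max ρ₁ ρ₂ →
        enorm2 (toE R ν - toR v) ≤ ρ' → ν ∈ Bx := by
      intro ν ρ' hρ' hν
      exact toE_coord_box hRpos (le_trans hν hρ')
    have hkey0 : ∀ μ ν₂ : ℤ × ℤ, G R (ν₂ + μ) ν₂ ≠ 0 → μ ∈ diffBox ∧ ν₂ ∈ Bx := by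
      intro μ ν₂ hne
      obtain ⟨hp, hq⟩ := hsupp _ _ hne
      have hb1 : ν₂ + μ ∈ Bx := by
        apply hmemBx _ ρ₁ (le_max_left _ _)
        rw [hC₁] at hp
        exact hp.2
      have hb2 : ν₂ ∈ Bx := by
        apply hmemBx _ ρ₂ (le_max_right _ _)
        rw [hC₂] at hq
        exact hq.2
      refine ⟨?_, hb2⟩
      simp only [hBxdef, Finset.mem_Icc, Prod.le_def, Prod.fst_add, Prod.snd_add] at hb1 hb2
      simp only [hdiffBoxdef, Finset.mem_Icc, Prod.le_def]
      omega
    -- summability of the reindexed double sum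
    have hsum2 : Summable (fun q : (ℤ × ℤ) × (ℤ × ℤ) => G R (q.2 + q.1) q.2) := by
      apply summable_of_ne_finset_zero (s := diffBox ×ˢ Bx)
      intro q hq
      by_contra hne
      obtain ⟨h1, h2⟩ := hkey0 q.1 q.2 hne
      exact hq (Finset.mem_product.mpr ⟨h1, h2⟩)
    have hinner : ∀ μ : ℤ × ℤ, Summable (fun ν₂ : ℤ × ℤ => G R (ν₂ + μ) ν₂) := by
      intro μ
      apply summable_of_ne_finset_zero (s := Bx)
      intro ν₂ hν₂
      by_contra hne
      exact hν₂ (hkey0 μ ν₂ hne).2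
    -- reindex
    have h1 := shiftEquiv.tsum_eq (fun p : (ℤ × ℤ) × (ℤ × ℤ) => G R p.1 p.2)
    simp only [shiftEquiv, Equiv.coe_fn_mk] at h1
    have h2 : (∑' q : (ℤ × ℤ) × (ℤ × ℤ), G R (q.2 + q.1) q.2)
        = ∑' μ : ℤ × ℤ, ∑' ν₂ : ℤ × ℤ, G R (ν₂ + μ) ν₂ := Summable.tsum_prod' hsum2 hinner
    -- bound each inner sum
    have hper : ∀ μ : ℤ × ℤ, (∑' ν₂ : ℤ × ℤ, G R (ν₂ + μ) ν₂) ≤ auxB K₁ ρ₂ F R μ := by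
      intro μ
      set e : ℝ := enorm2 (toR μ) with hedef
      have he0 : 0 ≤ e := enorm2_nonneg _
      set m : ℝ := min (K₁ * e) (ρ₂ * (R : ℝ)) with hmdef
      have hm0 : 0 ≤ m := le_min (mul_nonneg hK₁.le he0) (mul_nonneg hρ₂.le hRpos.le)
      set d : ℤ := ⌈m⌉ with hddef
      have hd0 : 0 ≤ d := Int.ceil_nonneg hm0
      set Q : Finset (ℤ × ℤ) :=
        Finset.Icc (((R : ℤ) * v.1 - d, (R : ℤ) * v.2 - d) : ℤ × ℤ)
          (((R : ℤ) * v.1 + d, (R : ℤ) * v.2 + d) : ℤ × ℤ) with hQdef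
      have hminmul : min (K₁ * e / R) ρ₂ * (R : ℝ) = m := by
        rw [min_mul_of_nonneg _ _ hRpos.le, div_mul_cancel₀ _ hRne]
      have hsupQ : ∀ ν₂ ∉ Q, G R (ν₂ + μ) ν₂ = 0 := by
        intro ν₂ hν₂
        by_contra hne
        obtain ⟨hp, hq⟩ := hsupp _ _ hne
        -- difference of the two grid points
        have hpq : toE R (ν₂ + μ) - toE R ν₂ = toE R μ := by
          simp only [toE, Prod.ext_iff, Prod.fst_sub, Prod.snd_sub, Prod.fst_add, Prod.snd_add]
          constructor <;> · push_cast; ring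
        have hEμ : enorm2 (toE R μ) = e / R := by
          have hsm : toE R μ = (R : ℝ)⁻¹ • toR μ := by
            simp only [toE, toR, Prod.ext_iff, Prod.smul_fst, Prod.smul_snd, smul_eq_mul]
            constructor <;> · field_simp
          rw [hsm, enorm2_smul, abs_of_nonneg (inv_nonneg.mpr hRpos.le), hedef,
            inv_mul_eq_div]
        have hc1 : c * enorm2 (toE R (ν₂ + μ) - toR v) ≤ e / R := by
          have := hcsep _ hp _ hq
          rwa [hpq, hEμ] at this
        have hA : enorm2 (toE R (ν₂ + μ) - toR v) ≤ c⁻¹ * (e / R) := by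
          have hmul := mul_le_mul_of_nonneg_left hc1 (le_of_lt (by positivity : (0:ℝ) < 1 / c))
          rwa [one_div, inv_mul_cancel_left₀ (ne_of_gt hc)] at hmul
        have htri : enorm2 (toE R ν₂ - toR v)
            ≤ e / R + enorm2 (toE R (ν₂ + μ) - toR v) := by
          have hdec : toE R ν₂ - toR v
              = (toE R ν₂ - toE R (ν₂ + μ)) + (toE R (ν₂ + μ) - toR v) := by abel
          calc enorm2 (toE R ν₂ - toR v)
              = enorm2 ((toE R ν₂ - toE R (ν₂ + μ)) + (toE R (ν₂ + μ) - toR v)) := by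
                rw [← hdec]
          _ ≤ enorm2 (toE R ν₂ - toE R (ν₂ + μ)) + enorm2 (toE R (ν₂ + μ) - toR v) :=
                enorm2_add_le _ _
          _ = e / R + enorm2 (toE R (ν₂ + μ) - toR v) := by
                rw [enorm2_sub_comm, hpq, hEμ]
        have hfin1 : enorm2 (toE R ν₂ - toR v) ≤ K₁ * e / R := by
          have hre : K₁ * e / R = e / R + c⁻¹ * (e / R) := by
            rw [hK₁def]; ring
          rw [hre]
          linarith
        have hfin2 : enorm2 (toE R ν₂ - toR v) ≤ ρ₂ := by
          rw [hC₂] at hq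
          exact hq.2
        have hball : enorm2 (toE R ν₂ - toR v) ≤ min (K₁ * e / R) ρ₂ := le_min hfin1 hfin2
        have hb := toE_coord_box hRpos hball
        rw [hminmul] at hb
        exact hν₂ hb
      have hval : ∀ ν₂ ∈ Q, G R (ν₂ + μ) ν₂ ≤ (R : ℝ)⁻¹ * F μ := by
        intro ν₂ _
        have h := (hG₀ R hRR₀ (ν₂ + μ) ν₂).2.1
        rwa [add_sub_cancel_left, one_div] at h
      have hcard : (Q.card : ℝ) ≤ (2 * m + 3) ^ 2 := by
        have hd1 : (d : ℝ) ≤ m + 1 := le_of_lt (Int.ceil_lt_add_one m)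
        calc (Q.card : ℝ) ≤ (2 * (m + 1) + 1) ^ 2 := box_card_le _ _ d hd0 hd1
        _ = (2 * m + 3) ^ 2 := by ring
      calc (∑' ν₂ : ℤ × ℤ, G R (ν₂ + μ) ν₂) = ∑ ν₂ ∈ Q, G R (ν₂ + μ) ν₂ :=
            tsum_eq_sum hsupQ
      _ ≤ Q.card • ((R : ℝ)⁻¹ * F μ) := Finset.sum_le_card_nsmul _ _ _ hval
      _ = (Q.card : ℝ) * ((R : ℝ)⁻¹ * F μ) := nsmul_eq_mul _ _
      _ ≤ (2 * m + 3) ^ 2 * ((R : ℝ)⁻¹ * F μ) :=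
            mul_le_mul_of_nonneg_right hcard
              (mul_nonneg (inv_nonneg.mpr hRpos.le) (hF0 μ))
      _ = auxB K₁ ρ₂ F R μ := rfl
    -- summability of the inner sums as a function of μ
    have hinnerμ : Summable (fun μ : ℤ × ℤ => ∑' ν₂ : ℤ × ℤ, G R (ν₂ + μ) ν₂) := by
      apply summable_of_ne_finset_zero (s := diffBox)
      intro μ hμ
      by_cases hz : ∀ ν₂ : ℤ × ℤ, G R (ν₂ + μ) ν₂ = 0
      · have hzf : (fun ν₂ : ℤ × ℤ => G R (ν₂ + μ) ν₂) = fun _ => 0 := funext hz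
        rw [hzf, tsum_zero]
      · push_neg at hz
        obtain ⟨ν₂, hν₂⟩ := hz
        exact absurd (hkey0 μ ν₂ hν₂).1 hμ
    have hauxBsum : Summable (fun μ : ℤ × ℤ => auxB K₁ ρ₂ F R μ) :=
      Summable.of_nonneg_of_le (fun μ => auxB_nonneg K₁ ρ₂ F hF0 R μ)
        (fun μ => auxB_le K₁ ρ₂ hK₁ hρ₂ F hF0 R μ) hg₀sum
    calc (∑' p : (ℤ × ℤ) × (ℤ × ℤ), G R p.1 p.2)
        = ∑' q : (ℤ × ℤ) × (ℤ × ℤ), G R (q.2 + q.1) q.2 := h1.symm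
    _ = ∑' μ : ℤ × ℤ, ∑' ν₂ : ℤ × ℤ, G R (ν₂ + μ) ν₂ := h2
    _ ≤ ∑' μ : ℤ × ℤ, auxB K₁ ρ₂ F R μ := Summable.tsum_le_tsum hper hinnerμ hauxBsum
  -- conclude by squeezing
  apply squeeze_zero' (f := fun R : ℕ => ∑' p : (ℤ × ℤ) × (ℤ × ℤ), G R p.1 p.2)
    (g := fun R : ℕ => ∑' μ : ℤ × ℤ, auxB K₁ ρ₂ F R μ) ?_ ?_ hDCT
  · filter_upwards [eventually_ge_atTop R₀] with R hRR₀
    exact tsum_nonneg fun p => (hG₀ R hRR₀ p.1 p.2).1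
  · filter_upwards [eventually_ge_atTop (max R₀ 1)] with R hR
    exact hmain R hR
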